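/- For a positive even integer k, the denominator of the Bernoulli quotient B_k/k (in lowest terms) equals ∏_{(p-1)|k} p^{v_p(k)+1}, the product over primes p with (p-1) dividing k. -/

import Mathlib

open Finset

lemma binom2 (x y n : ℕ) : ∃ r, (x + y) ^ n = x ^ n + n * x ^ (n - 1) * y + y ^ 2 * r := by
  induction n with
  | zero => exact ⟨0, by simp⟩
  | succ n ih =>
    obtain ⟨r, hr⟩ := ih
    rcases Nat.eq_zero_or_pos n with rfl | hn
    · exact ⟨0, by ring⟩
    · refine ⟨x * r + n * x ^ (n - 1) + y * r, ?_⟩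
      have hx : x ^ (n - 1) * x = x ^ n := by
        rw [← pow_succ, Nat.sub_add_cancel hn]
      calc (x + y) ^ (n + 1) = (x + y) ^ n * (x + y) := by ring
        _ = (x ^ n + n * x ^ (n - 1) * y + y ^ 2 * r) * (x + y) := by rw [hr]
        _ = x ^ n * x + (n * (x ^ (n-1) * x) * y + x ^ n * y) + y ^ 2 * (x * r + n * x ^ (n - 1) + y * r) := by ring
        _ = x ^ (n + 1) + (n + 1) * x ^ n * y + y ^ 2 * (x * r + n * x ^ (n - 1) + y * r) := by
          rw [hx]; ring

lemma sum_range_mul {M : Type*} [AddCommMonoid M] (f : ℕ → M) (m n : ℕ) :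
    ∑ i ∈ range (m * n), f i = ∑ b ∈ range n, ∑ a ∈ range m, f (m * b + a) := by
  induction n with
  | zero => simp
  | succ n ih =>
    rw [Finset.sum_range_succ, ← ih, Nat.mul_succ]
    rw [show range (m*n+m) = Ico 0 (m*n+m) by rw [Finset.range_eq_Ico],
        show range (m*n) = Ico 0 (m*n) by rw [Finset.range_eq_Ico],
      ← Finset.sum_Ico_consecutive f (Nat.zero_le (m*n)) (Nat.le_add_right (m*n) m)]
    congr 1
    rw [Finset.sum_Ico_eq_sum_range]
    simp [add_comm]

lemma modeq_sum {s : Finset ℕ} {f g : ℕ → ℕ} {n : ℕ} (h : ∀ i ∈ s, f i ≡ g i [MOD n]) :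
    ∑ i ∈ s, f i ≡ ∑ i ∈ s, g i [MOD n] := by
  classical
  induction s using Finset.induction with
  | empty => simp [Nat.ModEq.refl]
  | insert _ _ hx ih =>
    rw [Finset.sum_insert hx, Finset.sum_insert hx]
    exact (h _ (Finset.mem_insert_self _ _)).add (ih fun i hi => h i (Finset.mem_insert_of_mem hi))

/-- base case: for (p-1) ∣ k, k > 0:  p ∣ (∑_{i<p} i^k) + 1 -/
lemma fermat_base {p k : ℕ} (hp : p.Prime) (hk : 0 < k) (hd : (p - 1) ∣ k) :
    p ∣ (∑ i ∈ range p, i ^ k) + 1 := by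
  have h1 : ∀ i ∈ range (p-1), (i+1) ^ k ≡ 1 [MOD p] := by
    intro i hi
    rw [Finset.mem_range] at hi
    have hco : (i+1).Coprime p := (Nat.coprime_comm.mp ((Nat.Prime.coprime_iff_not_dvd hp).mpr
      (Nat.not_dvd_of_pos_of_lt (Nat.succ_pos i) (by omega))))
    have he : (i+1) ^ (p-1) ≡ 1 [MOD p] := by
      have := Nat.ModEq.pow_totient hco
      rwa [Nat.totient_prime hp] at this
    calc (i+1) ^ k = ((i+1) ^ (p-1)) ^ (k / (p-1)) := by
          rw [← pow_mul, Nat.mul_div_cancel' hd]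
      _ ≡ 1 ^ (k / (p-1)) [MOD p] := he.pow _
      _ = 1 := one_pow _
  have hppos : 1 ≤ p := hp.pos
  have hsum : ∑ i ∈ range p, i ^ k = 0 ^ k + ∑ i ∈ range (p-1), (i+1) ^ k := by
    conv_lhs => rw [show p = (p-1) + 1 by omega]
    rw [Finset.sum_range_succ']
    ring
  have h2 : ∑ i ∈ range (p-1), (i+1) ^ k ≡ ∑ _i ∈ range (p-1), 1 [MOD p] := modeq_sum h1
  have h3 : (∑ i ∈ range p, i ^ k) + 1 ≡ (p - 1) + 1 [MOD p] := by
    rw [hsum, zero_pow hk.ne', zero_add]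
    simpa using h2.add_right 1
  have : (p-1) + 1 = p := by omega
  rw [this] at h3
  exact (Nat.modEq_zero_iff_dvd).mp (h3.trans (Nat.modEq_zero_iff_dvd.mpr dvd_rfl))

lemma vsc_cong {p k : ℕ} (hp : p.Prime) (hk : 0 < k) (hke : Even k) (hd : (p - 1) ∣ k) :
    ∀ N, 1 ≤ N → p ^ N ∣ (∑ i ∈ range (p ^ N), i ^ k) + p ^ (N - 1) := by
  intro N
  induction N with
  | zero => omega
  | succ N ih =>
    intro _
    rcases Nat.eq_zero_or_pos N with rfl | hN
    · simpa using fermat_base hp hk hd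
    set M := p ^ N with hM
    set r : ℕ → ℕ → ℕ := fun a b => Classical.choose (binom2 a (M*b) k) with hr
    have hbin : ∀ a b : ℕ, (a + M * b) ^ k
        = a ^ k + k * a ^ (k-1) * (M * b) + (M * b) ^ 2 * r a b :=
      fun a b => Classical.choose_spec (binom2 a (M*b) k)
    set S := ∑ a ∈ range M, a ^ k with hS
    set A := ∑ a ∈ range M, k * a ^ (k-1) with hA
    set B := ∑ b ∈ range p, b with hB
    set R := ∑ b ∈ range p, ∑ a ∈ range M, b ^ 2 * r a b with hR
    have hsplit : ∑ i ∈ range (p ^ (N+1)), i ^ k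
        = p * S + (A * M) * B + M ^ 2 * R := by
      rw [pow_succ, sum_range_mul (fun i => i ^ k) M p]
      have hterm : ∀ b ∈ range p, ∑ a ∈ range M, (M * b + a) ^ k
          = S + (A * M) * b + M ^ 2 * (∑ a ∈ range M, b ^ 2 * r a b) := by
        intro b _
        calc ∑ a ∈ range M, (M * b + a) ^ k
            = ∑ a ∈ range M, (a ^ k + (k * a ^ (k-1) * M) * b + M ^ 2 * (b ^ 2 * r a b)) := by
              refine Finset.sum_congr rfl fun a _ => ?_
              rw [add_comm (M*b) a, hbin a b]; ring
          _ = S + (∑ a ∈ range M, (k * a ^ (k-1) * M)) * b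
              + M ^ 2 * (∑ a ∈ range M, b ^ 2 * r a b) := by
              rw [Finset.sum_add_distrib, Finset.sum_add_distrib, ← Finset.sum_mul,
                ← Finset.mul_sum]
          _ = S + (A * M) * b + M ^ 2 * (∑ a ∈ range M, b ^ 2 * r a b) := by
              rw [← Finset.sum_mul]
      rw [Finset.sum_congr rfl hterm, Finset.sum_add_distrib, Finset.sum_add_distrib,
        Finset.sum_const, Finset.card_range, ← Finset.mul_sum, ← Finset.mul_sum, smul_eq_mul]
    have hPB : p ∣ k * B := by
      have hB2 : B * 2 = p * (p - 1) := Finset.sum_range_id_mul_two p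
      rcases hp.eq_two_or_odd' with rfl | hodd
      · obtain ⟨t, rfl⟩ := hke
        exact Dvd.intro _ (by ring)
      · have hpd : p ∣ (k * B) * 2 := ⟨k * (p - 1), by rw [mul_assoc, hB2]; ring⟩
        refine Nat.Coprime.dvd_of_dvd_mul_right ?_ hpd
        refine (Nat.Prime.coprime_iff_not_dvd hp).mpr ?_
        intro h2
        have h2' := (Nat.prime_dvd_prime_iff_eq hp Nat.prime_two).mp h2
        subst h2'
        have := Nat.odd_iff.mp hodd
        omega
    have hAk : A = k * ∑ a ∈ range M, a ^ (k-1) := by rw [hA, Finset.mul_sum]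
    have h1 : p ^ (N+1) ∣ p * (S + p ^ (N-1)) := by
      rw [pow_succ']
      exact Nat.mul_dvd_mul dvd_rfl (ih hN)
    have h2 : p ^ (N+1) ∣ (A * M) * B := by
      have hdvd1 : p ^ (N+1) ∣ (k * B) * M := by
        rw [pow_succ', hM]
        exact Nat.mul_dvd_mul hPB dvd_rfl
      exact hdvd1.trans ⟨∑ a ∈ range M, a ^ (k-1), by rw [hAk]; ring⟩
    have h3 : p ^ (N+1) ∣ M ^ 2 * R := by
      have : p ^ (N+1) ∣ M ^ 2 := by
        rw [hM, ← pow_mul]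
        exact pow_dvd_pow p (by omega)
      exact this.mul_right R
    have hfin : (∑ i ∈ range (p ^ (N+1)), i ^ k) + p ^ (N+1-1)
        = p * (S + p ^ (N-1)) + ((A * M) * B + M ^ 2 * R) := by
      rw [hsplit]
      have hpow : p * p ^ (N-1) = p ^ (N+1-1) := by
        rw [← pow_succ']
        congr 1
        omega
      rw [Nat.mul_add, hpow]
      ring
    rw [hfin]
    exact Nat.dvd_add h1 (Nat.dvd_add h2 h3)

/-- Key LTE consequence: congruent mod p^N implies k-th powers congruent mod p^(N+v_p(k)). -/
lemma keyK {p k : ℕ} (hp : p.Prime) (hodd : Odd p) (hk2 : 2 ≤ k) {N : ℕ}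
    (hN : padicValNat p k ≤ N) (a b : ℤ) (hab : (p:ℤ) ^ N ∣ a - b) :
    (p:ℤ) ^ (N + padicValNat p k) ∣ a ^ k - b ^ k := by
  haveI : Fact p.Prime := ⟨hp⟩
  set w := padicValNat p k with hw
  by_cases hpa : (p:ℤ) ^ N ∣ a
  · have hpb : (p:ℤ) ^ N ∣ b := (dvd_sub_right hpa).mp hab
    have hNk : N + w ≤ N * k := by nlinarith
    have ha' : (p:ℤ) ^ (N + w) ∣ a ^ k :=
      (pow_dvd_pow (p:ℤ) hNk).trans (by rw [pow_mul]; exact pow_dvd_pow_of_dvd hpa k)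
    have hb' : (p:ℤ) ^ (N + w) ∣ b ^ k :=
      (pow_dvd_pow (p:ℤ) hNk).trans (by rw [pow_mul]; exact pow_dvd_pow_of_dvd hpb k)
    exact dvd_sub ha' hb'
  · have ha0 : a ≠ 0 := by rintro rfl; exact hpa (dvd_zero _)
    set j := padicValInt p a with hj
    have hjN : j < N := by
      by_contra hjN
      exact hpa ((padicValInt_dvd_iff N a).mpr (Or.inr (by omega)))
    obtain ⟨a1, ha1⟩ : (p:ℤ) ^ j ∣ a := padicValInt_dvd a
    have hpa1 : ¬ (p:ℤ) ∣ a1 := by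
      intro hdvd
      obtain ⟨a2, ha2⟩ := hdvd
      have : (p:ℤ) ^ (j+1) ∣ a := ⟨a2, by rw [ha1, ha2, pow_succ]; ring⟩
      rcases (padicValInt_dvd_iff (j+1) a).mp this with h | h
      · exact ha0 h
      · omega
    have hpjb : (p:ℤ) ^ j ∣ b := by
      have h1 : (p:ℤ) ^ j ∣ a - b := (pow_dvd_pow (p:ℤ) hjN.le).trans hab
      have := dvd_sub (ha1 ▸ Dvd.intro a1 rfl) h1
      simpa using this
    obtain ⟨b1, hb1⟩ := hpjb
    have hdiff : (p:ℤ) ^ (N - j) ∣ a1 - b1 := by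
      have hne : (p:ℤ) ^ j ≠ 0 := pow_ne_zero _ (by exact_mod_cast hp.ne_zero)
      have h1 : (p:ℤ) ^ j * (p:ℤ) ^ (N - j) ∣ (p:ℤ) ^ j * (a1 - b1) := by
        rw [← pow_add, Nat.add_sub_cancel' hjN.le, mul_sub, ← ha1, ← hb1]
        exact hab
      exact (mul_dvd_mul_iff_left hne).mp h1
    have hNj1 : 1 ≤ N - j := by omega
    have hpd1 : (p:ℤ) ∣ a1 - b1 := by
      have := (pow_dvd_pow (p:ℤ) hNj1).trans hdiff
      simpa using this
    have hpb1 : ¬ (p:ℤ) ∣ b1 := by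
      intro hdvd
      exact hpa1 (by have := dvd_add hpd1 hdvd; simpa using this)
    -- LTE
    have hlte := Int.emultiplicity_pow_sub_pow hp hodd hpd1 hpa1 k
    have hm1 : ((N - j : ℕ) : ℕ∞) ≤ emultiplicity (p:ℤ) (a1 - b1) :=
      le_emultiplicity_of_pow_dvd hdiff
    have hm2 : emultiplicity p k = (w : ℕ∞) :=
      (padicValNat_eq_emultiplicity (by omega)).symm
    have hm3 : ((N - j + w : ℕ) : ℕ∞) ≤ emultiplicity (p:ℤ) (a1 ^ k - b1 ^ k) := by
      rw [hlte, hm2]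
      push_cast
      exact add_le_add hm1 le_rfl
    have hdvd2 : (p:ℤ) ^ (N - j + w) ∣ a1 ^ k - b1 ^ k := pow_dvd_of_le_emultiplicity hm3
    have hfact : a ^ k - b ^ k = (p:ℤ) ^ (j * k) * (a1 ^ k - b1 ^ k) := by
      rw [ha1, hb1, mul_pow, mul_pow, ← pow_mul]
      ring
    obtain ⟨c, hc⟩ := hdvd2
    have hjk : j ≤ j * k := Nat.le_mul_of_pos_right j (by omega)
    rw [hfact, hc, ← mul_assoc, ← pow_add]
    exact Dvd.dvd.mul_right (pow_dvd_pow _ (by omega : N + w ≤ j * k + (N - j + w))) c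

lemma adams_dvd {p k : ℕ} (hp : p.Prime) (hodd : Odd p) (hk2 : 2 ≤ k) (hnd : ¬ (p - 1) ∣ k)
    {N : ℕ} (hN : padicValNat p k ≤ N) :
    (p:ℤ) ^ (N + padicValNat p k) ∣ ∑ i ∈ range (p ^ N), (i:ℤ) ^ k := by
  haveI : Fact p.Prime := ⟨hp⟩
  set w := padicValNat p k with hw
  set m := p ^ N with hm
  have hm0 : 0 < m := pow_pos hp.pos N
  haveI : NeZero m := ⟨hm0.ne'⟩
  obtain ⟨g, hg⟩ := IsCyclic.exists_generator (α := (ZMod p)ˣ)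
  have horder : orderOf g = p - 1 := by
    rw [orderOf_eq_card_of_forall_mem_zpowers hg, Nat.card_eq_fintype_card,
      ZMod.card_units_eq_totient, Nat.totient_prime hp]
  have hgk : g ^ k ≠ 1 := fun h => hnd (horder ▸ orderOf_dvd_of_pow_eq_one h)
  set c := ((g : ZMod p)).val with hc
  have hcg : ((c : ℕ) : ZMod p) = (g : ZMod p) :=
    (ZMod.natCast_val (g : ZMod p)).trans (ZMod.cast_id _ _)
  have hcp : ¬ p ∣ c := by
    intro hdvd
    have h0 : ((c : ℕ) : ZMod p) = 0 := (ZMod.natCast_eq_zero_iff c p).mpr hdvd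
    rw [hcg] at h0
    exact g.ne_zero h0
  have hck : ¬ (p:ℤ) ∣ ((c:ℤ) ^ k - 1) := by
    intro hdvd
    have h0 : (((c:ℤ) ^ k - 1 : ℤ) : ZMod p) = 0 := (ZMod.intCast_zmod_eq_zero_iff_dvd _ p).mpr hdvd
    push_cast at h0
    rw [hcg] at h0
    have hval : ((g ^ k : (ZMod p)ˣ) : ZMod p) = 1 := by
      rw [Units.val_pow_eq_pow_val]
      linear_combination h0
    exact hgk (Units.ext hval)
  have hcop : Nat.Coprime c m := ((hp.coprime_iff_not_dvd.mpr hcp).symm.pow_right N : _)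
  set u := ZMod.unitOfCoprime c hcop with hu
  set d := ((u⁻¹ : (ZMod m)ˣ) : ZMod m).val with hd
  have hdc : d * c ≡ 1 [MOD m] := by
    have h0 : ((d * c : ℕ) : ZMod m) = ((1 : ℕ) : ZMod m) := by
      push_cast
      have h1 : ((d : ℕ) : ZMod m) = ((u⁻¹ : (ZMod m)ˣ) : ZMod m) :=
        (ZMod.natCast_val _).trans (ZMod.cast_id _ _)
      have h2 : ((c : ℕ) : ZMod m) = (u : ZMod m) := (ZMod.coe_unitOfCoprime c hcop).symm
      rw [h1, h2, ← Units.val_mul, inv_mul_cancel u, Units.val_one]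
    exact (ZMod.natCast_eq_natCast_iff _ _ _).mp h0
  have hcd : c * d ≡ 1 [MOD m] := (mul_comm d c) ▸ hdc
  have hinv : ∀ x y : ℕ, x * y ≡ 1 [MOD m] → ∀ a ∈ range m, x * (y * a % m) % m = a := by
    intro x y hxy a ha
    have h1 : x * (y * a % m) ≡ a [MOD m] := by
      calc x * (y * a % m) ≡ x * (y * a) [MOD m] := (Nat.mod_modEq (y*a) m).mul_left x
        _ = (x * y) * a := by ring
        _ ≡ 1 * a [MOD m] := hxy.mul_right a
        _ = a := one_mul a
    have h2 : x * (y * a % m) % m = a % m := h1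
    rwa [Nat.mod_eq_of_lt (Finset.mem_range.mp ha)] at h2
  have hperm : ∑ i ∈ range m, ((c * i % m : ℕ) : ℤ) ^ k = ∑ i ∈ range m, (i:ℤ) ^ k := by
    refine Finset.sum_nbij' (fun a => c * a % m) (fun b => d * b % m) ?_ ?_ ?_ ?_ ?_
    · intro a _; exact Finset.mem_range.mpr (Nat.mod_lt _ hm0)
    · intro a _; exact Finset.mem_range.mpr (Nat.mod_lt _ hm0)
    · intro a ha; exact hinv d c hdc a ha
    · intro a ha; exact hinv c d hcd a ha
    · intro a _; rfl
  have hkey : ∀ i ∈ range m, (p:ℤ) ^ (N + w) ∣ ((c:ℤ) * i) ^ k - ((c * i % m : ℕ) : ℤ) ^ k := by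
    intro i _
    refine keyK hp hodd hk2 hN _ _ ?_
    have hsplit : m * (c * i / m) + c * i % m = c * i := Nat.div_add_mod (c*i) m
    refine ⟨((c * i / m : ℕ) : ℤ), ?_⟩
    have hz : ((m:ℕ):ℤ) * ((c*i/m : ℕ):ℤ) + ((c*i%m : ℕ):ℤ) = ((c:ℕ):ℤ) * ((i:ℕ):ℤ) := by
      exact_mod_cast congrArg (Nat.cast : ℕ → ℤ) hsplit
    have hmz : ((m : ℕ) : ℤ) = (p:ℤ) ^ N := by rw [hm]; push_cast; ring
    rw [← hmz]
    linarith
  have hdvd : (p:ℤ) ^ (N + w) ∣ ((c:ℤ) ^ k - 1) * ∑ i ∈ range m, (i:ℤ) ^ k := by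
    have heq : ((c:ℤ) ^ k - 1) * ∑ i ∈ range m, (i:ℤ) ^ k
        = ∑ i ∈ range m, (((c:ℤ) * i) ^ k - ((c * i % m : ℕ) : ℤ) ^ k) := by
      rw [Finset.sum_sub_distrib, hperm, sub_mul, one_mul]
      congr 1
      rw [Finset.mul_sum]
      exact Finset.sum_congr rfl fun i _ => (mul_pow _ _ _).symm
    rw [heq]
    exact Finset.dvd_sum hkey
  exact (Nat.prime_iff_prime_int.mp hp).pow_dvd_of_dvd_mul_left _ hck hdvd

section Helpers
variable {p : ℕ} [hp : Fact p.Prime]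

lemma padicNorm_p_pow (j : ℕ) : padicNorm p ((p ^ j : ℕ) : ℚ) = (p:ℚ) ^ (-(j:ℤ)) := by
  have h0 : ((p ^ j : ℕ) : ℚ) ≠ 0 := by
    exact_mod_cast (pow_pos hp.out.pos j).ne'
  rw [padicNorm.eq_zpow_of_nonzero h0, padicValRat.of_nat, padicValNat.prime_pow]

lemma padicValNat_le_self' {n : ℕ} (hn : n ≠ 0) : padicValNat p n ≤ n := by
  have h2 : p ^ padicValNat p n ≤ n := Nat.le_of_dvd (Nat.pos_of_ne_zero hn) pow_padicValNat_dvd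
  have h3 : n < p ^ n := Nat.lt_pow_self (n := n) hp.out.one_lt
  have := (Nat.pow_lt_pow_iff_right hp.out.one_lt).mp (lt_of_le_of_lt h2 h3)
  omega

lemma padicNorm_le_pow_den (q : ℚ) : padicNorm p q ≤ (p:ℚ) ^ (q.den : ℤ) := by
  have hp1 : (1:ℚ) < p := by exact_mod_cast hp.out.one_lt
  rcases eq_or_ne q 0 with rfl | hq
  · rw [padicNorm.zero]
    positivity
  · rw [padicNorm.eq_zpow_of_nonzero hq]
    apply zpow_le_zpow_right₀ hp1.le
    rw [padicValRat_def]
    have hden : (padicValNat p q.den : ℤ) ≤ (q.den : ℤ) := by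
      exact_mod_cast padicValNat_le_self' (p := p) q.den_nz
    have hnum : (0:ℤ) ≤ (padicValInt p q.num : ℤ) := Int.natCast_nonneg _
    omega

end Helpers

lemma bernoulli_approx (k p : ℕ) (hk : 0 < k) (hp : p.Prime) :
    ∃ N, 1 ≤ N ∧ padicValNat p k ≤ N ∧
      padicNorm p (bernoulli k - ((∑ i ∈ range (p ^ N), i ^ k : ℕ) : ℚ) / (p:ℚ) ^ N)
        ≤ (p:ℚ) ^ (-((padicValNat p k : ℤ) + 1)) := by
  haveI : Fact p.Prime := ⟨hp⟩
  have hp1 : (1:ℚ) < p := by exact_mod_cast hp.one_lt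
  have hp0 : (p:ℚ) ≠ 0 := by positivity
  set w := padicValNat p k with hw
  set D := ∑ i ∈ range (k+1), (bernoulli i).den with hD
  set N := w + k + 2 + D with hN
  refine ⟨N, by omega, by omega, ?_⟩
  set pn : ℚ := ((p ^ N : ℕ) : ℚ) with hpn
  have hpn0 : pn ≠ 0 := by
    rw [hpn]; exact_mod_cast (pow_pos hp.pos N).ne'
  have hpncast : pn = (p:ℚ) ^ N := by rw [hpn]; push_cast; ring
  have hk0 : ((k:ℚ) + 1) ≠ 0 := by positivity
  have hF : ((∑ i ∈ range (p ^ N), i ^ k : ℕ) : ℚ)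
      = ∑ i ∈ range (k+1), bernoulli i * ((k + 1).choose i) * pn ^ (k + 1 - i) / ((k:ℚ) + 1) := by
    rw [Nat.cast_sum]
    push_cast
    exact sum_range_pow (p ^ N) k
  have hsum : ((∑ i ∈ range (p ^ N), i ^ k : ℕ) : ℚ)
      = (∑ i ∈ range k, bernoulli i * ((k + 1).choose i) * pn ^ (k + 1 - i) / ((k:ℚ) + 1))
        + bernoulli k * pn := by
    rw [hF, Finset.sum_range_succ]
    congr 1
    rw [Nat.choose_succ_self_right]
    have h1 : k + 1 - k = 1 := by omega
    rw [h1, pow_one]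
    push_cast
    field_simp
  set T := ∑ i ∈ range k, bernoulli i * ((k + 1).choose i) * pn ^ (k + 1 - i) / ((k:ℚ) + 1)
    with hT
  have hdiff : bernoulli k - ((∑ i ∈ range (p ^ N), i ^ k : ℕ) : ℚ) / (p:ℚ) ^ N = -(T / pn) := by
    rw [← hpncast, hsum]
    field_simp
    ring
  rw [hdiff, padicNorm.neg]
  have hTsum : T / pn = ∑ i ∈ range k,
      (bernoulli i * ((k + 1).choose i) * pn ^ (k + 1 - i) / ((k:ℚ) + 1)) / pn := by
    rw [hT, Finset.sum_div]
  rw [hTsum]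
  apply padicNorm.sum_le'
  · intro i hi
    have him : i < k := Finset.mem_range.mp hi
    -- exact norms
    have hnpn : padicNorm p pn = (p:ℚ) ^ (-(N:ℤ)) := padicNorm_p_pow N
    have hnpnm : padicNorm p (pn ^ (k + 1 - i)) = (p:ℚ) ^ (-((N * (k+1-i) : ℕ) : ℤ)) := by
      have : pn ^ (k + 1 - i) = ((p ^ (N * (k+1-i)) : ℕ) : ℚ) := by
        rw [hpn, pow_mul]; push_cast; ring
      rw [this, padicNorm_p_pow]
    set v := padicValNat p (k+1) with hv
    have hnk1 : padicNorm p ((k:ℚ) + 1) = (p:ℚ) ^ (-(v:ℤ)) := by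
      have hcast : ((k:ℚ) + 1) = ((k + 1 : ℕ) : ℚ) := by push_cast; ring
      rw [hcast, padicNorm.eq_zpow_of_nonzero (by exact_mod_cast Nat.succ_ne_zero k),
        padicValRat.of_nat]
    have hvk : v ≤ k + 1 := padicValNat_le_self' (p := p) (Nat.succ_ne_zero k)
    -- bernoulli norm bound
    have hBden : (bernoulli i).den ≤ D := by
      rw [hD]
      exact Finset.single_le_sum (f := fun j => (bernoulli j).den)
        (fun j _ => Nat.zero_le _) (Finset.mem_range.mpr (by omega))
    have hBnorm : padicNorm p (bernoulli i) ≤ (p:ℚ) ^ (D:ℤ) :=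
      le_trans (padicNorm_le_pow_den _) (zpow_le_zpow_right₀ hp1.le (by exact_mod_cast hBden))
    have hCnorm : padicNorm p (((k + 1).choose i : ℕ) : ℚ) ≤ 1 := padicNorm.of_nat _
    -- combine
    rw [padicNorm.div, padicNorm.div, padicNorm.mul, padicNorm.mul, hnpn, hnpnm, hnk1]
    set m' := k + 1 - i with hm'
    have hm2 : 2 ≤ m' := by omega
    set e : ℤ := -((N * m' : ℕ) : ℤ) + (v:ℤ) + (N:ℤ) with he
    have heq : padicNorm p (bernoulli i) * padicNorm p (((k + 1).choose i : ℕ) : ℚ)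
        * (p:ℚ) ^ (-((N * m' : ℕ) : ℤ)) / (p:ℚ) ^ (-(v:ℤ)) / (p:ℚ) ^ (-(N:ℤ))
        = padicNorm p (bernoulli i) * padicNorm p (((k + 1).choose i : ℕ) : ℚ) * (p:ℚ) ^ e := by
      have h2 : (p:ℚ) ^ e = (p:ℚ) ^ (-((N * m' : ℕ) : ℤ)) * ((p:ℚ) ^ (-(v:ℤ)))⁻¹
          * ((p:ℚ) ^ (-(N:ℤ)))⁻¹ := by
        rw [← zpow_neg, ← zpow_neg, ← zpow_add₀ hp0, ← zpow_add₀ hp0]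
        congr 1
        rw [he]; ring
      rw [h2]; ring
    rw [heq]
    have hbc : padicNorm p (bernoulli i) * padicNorm p (((k + 1).choose i : ℕ) : ℚ)
        ≤ (p:ℚ) ^ (D:ℤ) * 1 :=
      mul_le_mul hBnorm hCnorm (padicNorm.nonneg _) (by positivity)
    calc padicNorm p (bernoulli i) * padicNorm p (((k + 1).choose i : ℕ) : ℚ) * (p:ℚ) ^ e
        ≤ ((p:ℚ) ^ (D:ℤ) * 1) * (p:ℚ) ^ e :=
          mul_le_mul_of_nonneg_right hbc (by positivity)
      _ = (p:ℚ) ^ ((D:ℤ) + e) := by rw [mul_one, ← zpow_add₀ hp0]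
      _ ≤ (p:ℚ) ^ (-((w : ℤ) + 1)) := by
          apply zpow_le_zpow_right₀ hp1.le
          have hNm : N * 2 ≤ N * m' := Nat.mul_le_mul_left N hm2
          have hNval : N = w + k + 2 + D := hN
          have hvk' : v ≤ k + 1 := hvk
          push_cast
          push_cast at hNm
          omega
  · positivity

lemma bernoulli_val_of_dvd {k p : ℕ} (hk : 0 < k) (hke : Even k) (hp : p.Prime)
    (hd : (p - 1) ∣ k) :
    bernoulli k ≠ 0 ∧ padicValRat p (bernoulli k) = -1 := by
  haveI : Fact p.Prime := ⟨hp⟩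
  have hp1 : (1:ℚ) < p := by exact_mod_cast hp.one_lt
  have hp0 : (p:ℚ) ≠ 0 := by positivity
  obtain ⟨N, hN1, hNw, happrox⟩ := bernoulli_approx k p hk hp
  set w := padicValNat p k with hw
  set S := ∑ i ∈ range (p ^ N), i ^ k with hS
  have hcong : p ^ N ∣ S + p ^ (N-1) := vsc_cong hp hk hke hd N hN1
  set z : ℤ := ((S + p ^ (N-1) : ℕ) : ℤ) - (p:ℤ) ^ N with hz
  have hzd : (p:ℤ) ^ N ∣ z := by
    rw [hz]
    refine dvd_sub ?_ dvd_rfl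
    have := Int.natCast_dvd_natCast.mpr hcong
    push_cast at this ⊢
    exact this
  have hnormz : padicNorm p (z:ℚ) ≤ (p:ℚ) ^ (-(N:ℤ)) := by
    refine (padicNorm.dvd_iff_norm_le (n := N) (z := z)).mp ?_
    push_cast
    exact hzd
  have hNpow : (p:ℚ) ^ N = (p:ℚ) ^ (N-1) * p := by
    rw [← pow_succ]
    congr 1
    omega
  have heq : (S:ℚ) / (p:ℚ) ^ N - (1 - (p:ℚ)⁻¹) = (z:ℚ) / (p:ℚ) ^ N := by
    have h1 : (z:ℚ) = (S:ℚ) + (p:ℚ) ^ (N-1) - (p:ℚ) ^ N := by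
      rw [hz]; push_cast; ring
    rw [h1, hNpow]
    field_simp
    ring
  have hterm2 : padicNorm p ((S:ℚ) / (p:ℚ) ^ N - (1 - (p:ℚ)⁻¹)) ≤ 1 := by
    rw [heq, padicNorm.div]
    have hpnn : padicNorm p ((p:ℚ) ^ N) = (p:ℚ) ^ (-(N:ℤ)) := by
      have : (p:ℚ) ^ N = ((p ^ N : ℕ) : ℚ) := by push_cast; ring
      rw [this, padicNorm_p_pow]
    rw [hpnn]
    rw [div_le_one (by positivity)]
    exact hnormz
  have hmax1 : padicNorm p (bernoulli k - (1 - (p:ℚ)⁻¹)) ≤ 1 := by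
    have hsplit : bernoulli k - (1 - (p:ℚ)⁻¹)
        = (bernoulli k - (S:ℚ) / (p:ℚ) ^ N) + ((S:ℚ) / (p:ℚ) ^ N - (1 - (p:ℚ)⁻¹)) := by ring
    rw [hsplit]
    refine le_trans padicNorm.nonarchimedean (max_le ?_ hterm2)
    refine le_trans happrox ?_
    calc (p:ℚ) ^ (-((w:ℤ) + 1)) ≤ (p:ℚ) ^ (0:ℤ) := zpow_le_zpow_right₀ hp1.le (by omega)
      _ = 1 := zpow_zero _
  have hinv : padicNorm p ((p:ℚ)⁻¹) = p := by
    rw [← one_div, padicNorm.div, padicNorm.one, padicNorm.padicNorm_p hp.one_lt, one_div, inv_inv]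
  have hone : padicNorm p (1 - (p:ℚ)⁻¹) = p := by
    rw [sub_eq_add_neg, padicNorm.add_eq_max_of_ne]
    · rw [padicNorm.one, padicNorm.neg, hinv]
      exact max_eq_right hp1.le
    · rw [padicNorm.one, padicNorm.neg, hinv]
      exact fun h => (lt_irrefl _ (h ▸ hp1))
  have hBnorm : padicNorm p (bernoulli k) = p := by
    have hsplit : bernoulli k = (bernoulli k - (1 - (p:ℚ)⁻¹)) + (1 - (p:ℚ)⁻¹) := by ring
    rw [hsplit, padicNorm.add_eq_max_of_ne, hone]
    · exact max_eq_right (le_trans hmax1 hp1.le)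
    · rw [hone]
      exact fun h => absurd (h ▸ hmax1) (not_le.mpr hp1)
  have hB0 : bernoulli k ≠ 0 := by
    intro h
    rw [h, padicNorm.zero] at hBnorm
    exact absurd hBnorm.symm (by positivity)
  refine ⟨hB0, ?_⟩
  have := padicNorm.eq_zpow_of_nonzero (p := p) hB0
  rw [hBnorm] at this
  have h1 : (p:ℚ) ^ (1:ℤ) = (p:ℚ) ^ (-padicValRat p (bernoulli k)) := by
    rw [zpow_one]; exact this
  have h2 := zpow_right_injective₀ (by positivity : (0:ℚ) < p) (ne_of_gt hp1) h1
  omega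

lemma bernoulli_val_of_not_dvd {k p : ℕ} (hk : 0 < k) (hke : Even k) (hp : p.Prime)
    (hnd : ¬ (p - 1) ∣ k) (hB0 : bernoulli k ≠ 0) :
    (padicValNat p k : ℤ) ≤ padicValRat p (bernoulli k) := by
  haveI : Fact p.Prime := ⟨hp⟩
  have hp1 : (1:ℚ) < p := by exact_mod_cast hp.one_lt
  have hp0 : (p:ℚ) ≠ 0 := by positivity
  have hne2 : p ≠ 2 := by
    rintro rfl
    exact hnd (by norm_num)
  have hodd : Odd p := hp.odd_of_ne_two hne2
  have hk2 : 2 ≤ k := by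
    rcases hke with ⟨t, rfl⟩
    omega
  obtain ⟨N, hN1, hNw, happrox⟩ := bernoulli_approx k p hk hp
  set w := padicValNat p k with hw
  set S := ∑ i ∈ range (p ^ N), i ^ k with hS
  have hadams : (p:ℤ) ^ (N + w) ∣ ((S:ℕ):ℤ) := by
    have h := adams_dvd hp hodd hk2 hnd hNw
    have hcast : (∑ i ∈ range (p ^ N), (i:ℤ) ^ k) = ((S:ℕ):ℤ) := by
      rw [hS]; push_cast; ring
    rwa [hcast] at h
  have hnormS : padicNorm p ((S:ℕ):ℚ) ≤ (p:ℚ) ^ (-((N:ℤ) + w)) := by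
    have := (padicNorm.dvd_iff_norm_le (n := N + w) (z := ((S:ℕ):ℤ))).mp (by push_cast; exact_mod_cast hadams)
    rw [Int.cast_natCast] at this
    refine le_trans this ?_
    apply zpow_le_zpow_right₀ hp1.le
    push_cast
    omega
  have hnorm1 : padicNorm p ((S:ℚ) / (p:ℚ) ^ N) ≤ (p:ℚ) ^ (-(w:ℤ)) := by
    rw [padicNorm.div]
    have hpnn : padicNorm p ((p:ℚ) ^ N) = (p:ℚ) ^ (-(N:ℤ)) := by
      have : (p:ℚ) ^ N = ((p ^ N : ℕ) : ℚ) := by push_cast; ring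
      rw [this, padicNorm_p_pow]
    rw [hpnn, div_le_iff₀ (by positivity)]
    rw [← zpow_add₀ hp0]
    refine le_trans hnormS ?_
    apply zpow_le_zpow_right₀ hp1.le
    omega
  have hnormB : padicNorm p (bernoulli k) ≤ (p:ℚ) ^ (-(w:ℤ)) := by
    have hsplit : bernoulli k = (bernoulli k - (S:ℚ) / (p:ℚ) ^ N) + (S:ℚ) / (p:ℚ) ^ N := by ring
    rw [hsplit]
    refine le_trans padicNorm.nonarchimedean (max_le ?_ hnorm1)
    refine le_trans happrox ?_
    apply zpow_le_zpow_right₀ hp1.le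
    omega
  rw [padicNorm.eq_zpow_of_nonzero hB0] at hnormB
  have := (zpow_le_zpow_iff_right₀ hp1).mp hnormB
  omega

theorem stmt10 (k : ℕ) (hk : 0 < k) (hke : Even k) :
    (bernoulli k / (k : ℚ)).den =
      ∏ p ∈ Finset.filter (fun p => p.Prime ∧ (p - 1) ∣ k) (Finset.range (k + 2)),
        p ^ (padicValNat p k + 1) := by
  have hkq0 : (k:ℚ) ≠ 0 := Nat.cast_ne_zero.mpr hk.ne'
  have hB0 : bernoulli k ≠ 0 :=
    (bernoulli_val_of_dvd hk hke Nat.prime_three (by norm_num; exact hke.two_dvd)).1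
  set q : ℚ := bernoulli k / (k : ℚ) with hq
  have hq0 : q ≠ 0 := div_ne_zero hB0 hkq0
  have hnum0 : q.num ≠ 0 := Rat.num_ne_zero.mpr hq0
  set P := Finset.filter (fun p => p.Prime ∧ (p - 1) ∣ k) (Finset.range (k + 2)) with hP
  have hd0 : (∏ p ∈ P, p ^ (padicValNat p k + 1)) ≠ 0 := by
    rw [Finset.prod_ne_zero_iff]
    intro p hp
    exact pow_ne_zero _ ((Finset.mem_filter.mp hp).2.1).pos.ne'
  apply Nat.eq_of_factorization_eq q.den_nz hd0
  intro r
  by_cases hr : r.Prime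
  · haveI : Fact r.Prime := ⟨hr⟩
    set w := padicValNat r k with hw
    -- RHS factorization
    have hRHS : (∏ p ∈ P, p ^ (padicValNat p k + 1)).factorization r
        = if (r - 1) ∣ k then w + 1 else 0 := by
      rw [Nat.factorization_prod (fun p hp => pow_ne_zero _
        ((Finset.mem_filter.mp hp).2.1).pos.ne')]
      rw [Finset.sum_apply']
      rw [Finset.sum_congr rfl (fun p hp => by
        rw [((Finset.mem_filter.mp hp).2.1).factorization_pow, Finsupp.single_apply])]
      rw [Finset.sum_ite_eq' P r (fun p => padicValNat p k + 1)]
      by_cases hdvd : (r - 1) ∣ k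
      · have hrmem : r ∈ P := by
          rw [hP, Finset.mem_filter, Finset.mem_range]
          refine ⟨?_, hr, hdvd⟩
          have := Nat.le_of_dvd hk hdvd
          omega
        rw [if_pos hrmem, if_pos hdvd]
      · have hrmem : r ∉ P := by
          rw [hP, Finset.mem_filter]
          rintro ⟨-, -, h⟩
          exact hdvd h
        rw [if_neg hrmem, if_neg hdvd]
    rw [hRHS, Nat.factorization_def _ hr]
    -- valuation of q
    have hvk : padicValRat r ((k:ℕ):ℚ) = (w:ℤ) := padicValRat.of_nat
    have hvq : padicValRat r q = padicValRat r (bernoulli k) - w := by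
      rw [hq, padicValRat.div hB0 hkq0, hvk]
    have hval_def : padicValRat r q = (padicValInt r q.num : ℤ) - (padicValNat r q.den : ℤ) :=
      padicValRat_def r q
    have hcoprime : ¬ (r ∣ q.num.natAbs ∧ r ∣ q.den) := by
      rintro ⟨h1, h2⟩
      have h3 : r ∣ Nat.gcd q.num.natAbs q.den := Nat.dvd_gcd h1 h2
      have h4 : Nat.gcd q.num.natAbs q.den = 1 := q.reduced
      rw [h4] at h3
      exact hr.one_lt.ne' (Nat.dvd_one.mp h3)
    by_cases hdvd : (r - 1) ∣ k
    · rw [if_pos hdvd]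
      have hvalB := (bernoulli_val_of_dvd hk hke hr hdvd).2
      have hqv : padicValRat r q = -1 - w := by rw [hvq, hvalB]
      rw [hval_def] at hqv
      by_cases hrden : r ∣ q.den
      · have hrnum : ¬ r ∣ q.num.natAbs := fun h => hcoprime ⟨h, hrden⟩
        have hnum : padicValInt r q.num = 0 := padicValNat.eq_zero_of_not_dvd hrnum
        rw [hnum] at hqv
        omega
      · have hden : padicValNat r q.den = 0 := padicValNat.eq_zero_of_not_dvd hrden
        rw [hden] at hqv
        have := Int.natCast_nonneg (padicValInt r q.num)
        omega
    · rw [if_neg hdvd]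
      have hvalB := bernoulli_val_of_not_dvd hk hke hr hdvd hB0
      have hqv : (0:ℤ) ≤ padicValRat r q := by rw [hvq]; omega
      rw [hval_def] at hqv
      by_cases hrden : r ∣ q.den
      · exfalso
        have hrnum : ¬ r ∣ q.num.natAbs := fun h => hcoprime ⟨h, hrden⟩
        have hnum : padicValInt r q.num = 0 := padicValNat.eq_zero_of_not_dvd hrnum
        have hd1 : 1 ≤ padicValNat r q.den := by
          rcases (padicValNat_dvd_iff (p := r) 1 q.den).mp (by rwa [pow_one]) with h | h
          · exact absurd h q.den_nz
          · exact h
        rw [hnum] at hqv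
        omega
      · exact padicValNat.eq_zero_of_not_dvd hrden
  · rw [Nat.factorization_eq_zero_of_not_prime _ hr, Nat.factorization_eq_zero_of_not_prime _ hr]
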